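/- arXiv:2001.05632 — 6 statements merged into one kernel-verified Lean document; each statement's English description precedes it below -/
import Mathlib

section
/- Let n ≥ 1 and θ₁, …, θₙ ∈ ℝ. Let Aₙ be the n×n matrix whose (i,j)-entry is sin(iθⱼ). Then det(Aₙ) = 2^(n(n−1)/2) · (∏_{k=1}^{n} sin θ_k) · ∏_{1 ≤ k < l ≤ n} (cos θ_l − cos θ_k). -/
open Finset Polynomial Polynomial.Chebyshev

private lemma U_deg_coeff : ∀ m : ℕ, (U ℝ m).natDegree = m ∧ (U ℝ m).coeff m = 2 ^ m := by
  have key : ∀ m : ℕ, ((U ℝ m).natDegree = m ∧ (U ℝ m).coeff m = 2 ^ m) ∧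
      ((U ℝ (m+1)).natDegree = m+1 ∧ (U ℝ (m+1)).coeff (m+1) = 2 ^ (m+1)) := by
    intro m
    induction m with
    | zero =>
      refine ⟨⟨?_, ?_⟩, ?_, ?_⟩ <;> simp [U_zero, U_one, coeff_X]
    | succ m ih =>
      refine ⟨ih.2, ?_⟩
      have hrec : U ℝ ((m : ℤ) + 2) = 2 * X * U ℝ (m + 1) - U ℝ m := U_add_two ℝ m
      have hle : (U ℝ ((m : ℤ) + 2)).natDegree ≤ m + 2 := by
        rw [hrec]
        refine le_trans (natDegree_sub_le _ _) ?_
        simp only [max_le_iff]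
        constructor
        · refine le_trans (natDegree_mul_le) ?_
          have h1 : (2 * X : ℝ[X]).natDegree ≤ 1 := by
            refine le_trans (natDegree_mul_le) ?_
            simp
          omega
        · omega
      have hco : (U ℝ ((m : ℤ) + 2)).coeff (m + 2) = 2 ^ (m + 2) := by
        rw [hrec]
        have h1 : (2 * X * U ℝ ((m : ℤ) + 1)).coeff (m + 2) =
            2 * (U ℝ ((m : ℤ) + 1)).coeff (m + 1) := by
          rw [mul_assoc, coeff_ofNat_mul, show m + 2 = m + 1 + 1 from rfl, coeff_X_mul]
        have h2 : (U ℝ (m : ℤ)).coeff (m + 2) = 0 :=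
          coeff_eq_zero_of_natDegree_lt (by rw [ih.1.1]; omega)
        rw [coeff_sub, h1, h2]
        push_cast [ih.2.2]
        ring
      have hdeg : (U ℝ ((m : ℤ) + 2)).natDegree = m + 2 := by
        refine le_antisymm hle (le_natDegree_of_ne_zero ?_)
        rw [hco]; positivity
      have e : (((m + 1 : ℕ) : ℤ) + 1) = ((m : ℤ) + 2) := by push_cast; ring
      rw [e]
      exact ⟨hdeg, hco⟩
  exact fun m => (key m).1

private lemma sum_fin_id (n : ℕ) : ∑ j : Fin n, (j : ℕ) = n * (n - 1) / 2 := by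
  rw [Fin.sum_univ_eq_sum_range (fun i => i) n, Finset.sum_range_id]

theorem det_sin_matrix (n : ℕ) (hn : 1 ≤ n) (θ : Fin n → ℝ) :
    (Matrix.of fun i j : Fin n => Real.sin (((i : ℕ) + 1) * θ j)).det =
      2 ^ (n * (n - 1) / 2) * (∏ k : Fin n, Real.sin (θ k)) *
        ∏ l : Fin n, ∏ k ∈ Finset.Iio l, (Real.cos (θ l) - Real.cos (θ k)) := by
  -- rewrite entries using Chebyshev U
  have entry : ∀ i j : Fin n, Real.sin (((i : ℕ) + 1) * θ j) =
      Real.sin (θ j) * (U ℝ (i : ℕ)).eval (Real.cos (θ j)) := by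
    intro i j
    have h := U_real_cos (θ j) (i : ℕ)
    rw [mul_comm] at h
    push_cast at h
    exact h.symm
  have h1 : (Matrix.of fun i j : Fin n => Real.sin (((i : ℕ) + 1) * θ j)).det =
      (∏ k : Fin n, Real.sin (θ k)) *
        (Matrix.of fun i j : Fin n => (U ℝ (i : ℕ)).eval (Real.cos (θ j))).det := by
    rw [← Matrix.det_mul_row]
    congr 1
    ext i j
    exact entry i j
  -- transpose
  have h2 : (Matrix.of fun i j : Fin n => (U ℝ (i : ℕ)).eval (Real.cos (θ j))).det =
      (Matrix.of fun i j : Fin n => (U ℝ (j : ℕ)).eval (Real.cos (θ i))).det := by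
    rw [← Matrix.det_transpose]
    rfl
  -- normalize to monic polynomials
  set p : Fin n → ℝ[X] := fun j => Polynomial.C ((2 : ℝ) ^ (j : ℕ))⁻¹ * U ℝ (j : ℕ) with hp
  have hdeg : ∀ j : Fin n, (p j).natDegree = (j : ℕ) := by
    intro j
    rw [hp]
    simp only
    rw [natDegree_C_mul (by positivity), (U_deg_coeff (j : ℕ)).1]
  have hmonic : ∀ j : Fin n, (p j).Monic := by
    intro j
    have h0 : (U ℝ ((j : ℕ) : ℤ)).leadingCoeff = 2 ^ (j : ℕ) := by
      rw [Polynomial.leadingCoeff, (U_deg_coeff (j : ℕ)).1, (U_deg_coeff (j : ℕ)).2]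
    rw [Monic, hp]
    simp only
    rw [leadingCoeff_mul, leadingCoeff_C, h0]
    field_simp
  have h3 : (Matrix.of fun i j : Fin n => (p j).eval (Real.cos (θ i))).det =
      (∏ j : Fin n, ((2 : ℝ) ^ (j : ℕ))⁻¹) *
        (Matrix.of fun i j : Fin n => (U ℝ (j : ℕ)).eval (Real.cos (θ i))).det := by
    rw [← Matrix.det_mul_row]
    congr 1
    ext i j
    simp [hp]
  have h4 := Matrix.det_eval_matrixOfPolynomials_eq_det_vandermonde
      (fun i : Fin n => Real.cos (θ i)) p hdeg hmonic
  have hprod : (∏ j : Fin n, (2 : ℝ) ^ (j : ℕ)) = 2 ^ (n * (n - 1) / 2) := by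
    rw [Finset.prod_pow_eq_pow_sum, sum_fin_id]
  have hinv : (∏ j : Fin n, ((2 : ℝ) ^ (j : ℕ))⁻¹) =
      (∏ j : Fin n, (2 : ℝ) ^ (j : ℕ))⁻¹ := by
    rw [Finset.prod_inv_distrib]
  have h5 : (Matrix.of fun i j : Fin n => (U ℝ (j : ℕ)).eval (Real.cos (θ i))).det =
      2 ^ (n * (n - 1) / 2) *
        (Matrix.vandermonde fun i : Fin n => Real.cos (θ i)).det := by
    rw [h4, h3, hinv, hprod, ← mul_assoc,
      mul_inv_cancel₀ (by positivity : (2 : ℝ) ^ (n * (n - 1) / 2) ≠ 0), one_mul]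
  have h6 : (Matrix.vandermonde fun i : Fin n => Real.cos (θ i)).det =
      ∏ l : Fin n, ∏ k ∈ Finset.Iio l, (Real.cos (θ l) - Real.cos (θ k)) := by
    rw [Matrix.det_vandermonde]
    rw [Finset.prod_comm' (s := Finset.univ) (t := fun i => Finset.Ioi i)
      (t' := Finset.univ) (s' := fun l => Finset.Iio l)]
    intro i j
    simp [Finset.mem_Ioi, Finset.mem_Iio]
  rw [h1, h2, h5, h6]
  ring
end

section
/- Let k > ℓ ≥ 1 be integers with k − ℓ ≥ 1, and let t be an integer with 1 ≤ t ≤ k − ℓ. Let Ω_t ⊆ ℝ/ℤ be the image of the open interval ((t−1)/(k−ℓ) + ℓ/(k²−ℓ²), (t−1)/(k−ℓ) + k/(k²−ℓ²)) under the quotient map ℝ → ℝ/ℤ. Then Ω_t is (k,ℓ)-sum-free: there do not exist x₁, …, x_k, y₁, …, y_ℓ ∈ Ω_t with x₁ + ⋯ + x_k = y₁ + ⋯ + y_ℓ in ℝ/ℤ. -/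
open Finset

theorem omega_t_sum_free (k l t : ℕ) (hl : 1 ≤ l) (hkl : l < k)
    (ht1 : 1 ≤ t) (ht2 : t ≤ k - l)
    (Ω : Set (AddCircle (1 : ℝ)))
    (hΩ : Ω = (fun x : ℝ => (x : AddCircle (1 : ℝ))) ''
      Set.Ioo (((t : ℝ) - 1) / ((k : ℝ) - l) + (l : ℝ) / ((k : ℝ) ^ 2 - (l : ℝ) ^ 2))
              (((t : ℝ) - 1) / ((k : ℝ) - l) + (k : ℝ) / ((k : ℝ) ^ 2 - (l : ℝ) ^ 2))) :
    ¬ ∃ (x : Fin k → AddCircle (1 : ℝ)) (y : Fin l → AddCircle (1 : ℝ)),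
        (∀ i, x i ∈ Ω) ∧ (∀ j, y j ∈ Ω) ∧ ∑ i, x i = ∑ j, y j := by
  rintro ⟨x, y, hx, hy, hsum⟩
  subst hΩ
  set a : ℝ := ((t : ℝ) - 1) / ((k : ℝ) - l) with ha
  set D : ℝ := (k : ℝ) ^ 2 - (l : ℝ) ^ 2 with hD
  have hkl' : (l : ℝ) < k := by exact_mod_cast hkl
  have hl' : (1 : ℝ) ≤ l := by exact_mod_cast hl
  have hk0 : (0 : ℝ) < (k : ℝ) - l := by linarith
  have hD0 : (0 : ℝ) < D := by rw [hD]; nlinarith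
  have hkpos : 0 < k := lt_trans (Nat.lt_of_lt_of_le Nat.zero_lt_one hl) hkl
  have hlpos : 0 < l := hl
  choose u hu hux using fun i => hx i
  choose v hv hvy using fun j => hy j
  have hm : ∀ (n : ℕ) (f : Fin n → ℝ),
      ((∑ i, f i : ℝ) : AddCircle (1 : ℝ)) = ∑ i, ((f i : ℝ) : AddCircle (1 : ℝ)) :=
    fun n f => map_sum (QuotientAddGroup.mk' (AddSubgroup.zmultiples (1 : ℝ))) f univ
  have hzero : ((∑ i, u i - ∑ j, v j : ℝ) : AddCircle (1 : ℝ)) = 0 := by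
    rw [AddCircle.coe_sub, hm, hm, sub_eq_zero]
    simp only [hux, hvy, hsum]
  obtain ⟨n, hn⟩ := (AddCircle.coe_eq_zero_iff (1 : ℝ)).mp hzero
  rw [zsmul_eq_mul, mul_one] at hn
  -- bounds on the sums
  have hub : ∑ i, u i < (k : ℝ) * (a + (k : ℝ) / D) := by
    calc ∑ i, u i < ∑ _i : Fin k, (a + (k : ℝ) / D) :=
          Finset.sum_lt_sum_of_nonempty (univ_nonempty_iff.mpr ⟨⟨0, hkpos⟩⟩)
            (fun i _ => (hu i).2)
      _ = (k : ℝ) * (a + (k : ℝ) / D) := by simp [mul_comm]; ring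
  have hlb : (k : ℝ) * (a + (l : ℝ) / D) < ∑ i, u i := by
    calc (k : ℝ) * (a + (l : ℝ) / D) = ∑ _i : Fin k, (a + (l : ℝ) / D) := by simp [mul_comm]; ring
      _ < ∑ i, u i :=
          Finset.sum_lt_sum_of_nonempty (univ_nonempty_iff.mpr ⟨⟨0, hkpos⟩⟩)
            (fun i _ => (hu i).1)
  have hub' : ∑ j, v j < (l : ℝ) * (a + (k : ℝ) / D) := by
    calc ∑ j, v j < ∑ _j : Fin l, (a + (k : ℝ) / D) :=
          Finset.sum_lt_sum_of_nonempty (univ_nonempty_iff.mpr ⟨⟨0, hlpos⟩⟩)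
            (fun j _ => (hv j).2)
      _ = (l : ℝ) * (a + (k : ℝ) / D) := by simp [mul_comm]; ring
  have hlb' : (l : ℝ) * (a + (l : ℝ) / D) < ∑ j, v j := by
    calc (l : ℝ) * (a + (l : ℝ) / D) = ∑ _j : Fin l, (a + (l : ℝ) / D) := by simp [mul_comm]; ring
      _ < ∑ j, v j :=
          Finset.sum_lt_sum_of_nonempty (univ_nonempty_iff.mpr ⟨⟨0, hlpos⟩⟩)
            (fun j _ => (hv j).1)
  have e1 : (k : ℝ) * (a + (l : ℝ) / D) - (l : ℝ) * (a + (k : ℝ) / D) = (t : ℝ) - 1 := by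
    rw [ha, hD]
    have h1 : ((k : ℝ) - l) ≠ 0 := hk0.ne'
    have h2 : ((k : ℝ) ^ 2 - (l : ℝ) ^ 2) ≠ 0 := hD0.ne'
    field_simp
    ring
  have e2 : (k : ℝ) * (a + (k : ℝ) / D) - (l : ℝ) * (a + (l : ℝ) / D) = (t : ℝ) := by
    rw [ha, hD]
    have h1 : ((k : ℝ) - l) ≠ 0 := hk0.ne'
    have h2 : ((k : ℝ) ^ 2 - (l : ℝ) ^ 2) ≠ 0 := hD0.ne'
    field_simp
    ring
  have h1 : ((t : ℝ) - 1) < n := by rw [hn]; linarith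
  have h2 : (n : ℝ) < t := by rw [hn]; linarith
  have h1' : (t : ℤ) - 1 < n := by exact_mod_cast h1
  have h2' : n < (t : ℤ) := by exact_mod_cast h2
  omega
end

section
/- Let k > ℓ ≥ 1 be integers and let A ⊆ ℝ/ℤ be an open (k,ℓ)-sum-free set. Then the Haar probability measure of A is at most 1/(k+ℓ). -/
open Finset MeasureTheory Metric
open scoped Pointwise

-- helper 1
lemma mem_nsmul_finset_exists {G : Type*} [AddCommMonoid G] [DecidableEq G] :
    ∀ (n : ℕ) (S : Finset G) (z : G), z ∈ n • S →
      ∃ f : Fin n → G, (∀ i, f i ∈ S) ∧ ∑ i, f i = z := by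
  intro n
  induction n with
  | zero =>
    intro S z hz
    refine ⟨fun i => i.elim0, fun i => i.elim0, ?_⟩
    simp only [zero_nsmul] at hz
    simpa using (Finset.mem_zero.mp hz).symm
  | succ n ih =>
    intro S z hz
    rw [succ_nsmul] at hz
    obtain ⟨a, ha, b, hb, rfl⟩ := Finset.mem_add.mp hz
    obtain ⟨f, hf, hfs⟩ := ih S a ha
    refine ⟨Fin.snoc f b, ?_, ?_⟩
    · intro i
      refine Fin.lastCases ?_ ?_ i
      · simpa using hb
      · intro j; simpa using hf j
    · rw [Fin.sum_univ_castSucc]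
      simp [hfs]

-- helper 2
lemma card_nsmul_ge {p : ℕ} (hp : p.Prime) (S : Finset (ZMod p)) (hS : S.Nonempty) :
    ∀ n : ℕ, 1 ≤ n → min p (n * (#S - 1) + 1) ≤ #(n • S) := by
  intro n
  induction n with
  | zero => omega
  | succ n ih =>
    intro _
    rcases Nat.eq_or_lt_of_le (Nat.one_le_iff_ne_zero.mpr (Nat.succ_ne_zero n)) with h1 | h1
    · have h0 : n = 0 := by omega
      subst h0
      rw [show (0+1) = 1 from rfl, one_nsmul, one_mul]
      have := Finset.card_pos.mpr hS
      omega
    · have hn : 1 ≤ n := by omega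
      have hIH := ih hn
      have hne : (n • S).Nonempty := by
        rw [← Finset.card_pos]
        have : 0 < min p (n * (#S - 1) + 1) := lt_min hp.pos (by omega)
        omega
      have hCD := ZMod.cauchy_davenport hp hne hS
      rw [succ_nsmul]
      have hcard : 1 ≤ #S := Finset.card_pos.mpr hS
      have hmul : (n + 1) * (#S - 1) = n * (#S - 1) + (#S - 1) := by ring
      omega
open scoped Pointwise

noncomputable def gridHom (p : ℕ) (hp : p ≠ 0) : ZMod p →+ AddCircle (1 : ℝ) :=
  ZMod.lift p ⟨(QuotientAddGroup.mk' (AddSubgroup.zmultiples (1 : ℝ))).comp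
      (AddMonoidHom.mk' (fun m : ℤ => (m : ℝ) / p) (by intro a b; push_cast; ring)), by
    simp only [AddMonoidHom.comp_apply, AddMonoidHom.mk'_apply]
    have h1 : ((p:ℤ):ℝ) / (p:ℝ) = 1 := by
      rw [Int.cast_natCast, div_self (by exact_mod_cast hp)]
    rw [h1]
    simpa using AddCircle.coe_period (p := (1:ℝ))⟩

lemma gridHom_natCast (p : ℕ) (hp : p ≠ 0) (j : ℕ) :
    gridHom p hp ((j : ZMod p)) = (((j : ℝ) / p : ℝ) : AddCircle (1 : ℝ)) := by
  have : ((j : ZMod p)) = (((j : ℤ)) : ZMod p) := by push_cast; ring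
  rw [this, gridHom, ZMod.lift_coe]
  simp

lemma count_lemma (A : Set (AddCircle (1 : ℝ))) (K : Set (AddCircle (1 : ℝ)))
    (hK : IsCompact K) (δ : ℝ) (hδ : 0 < δ) (hthick : Metric.thickening δ K ⊆ A)
    (p : ℕ) (hp : p ≠ 0) (hpδ : 1 / (p : ℝ) < δ) :
    ∀ S : Finset (ZMod p), (∀ z : ZMod p, gridHom p hp z ∈ A → z ∈ S) →
    (volume K).toReal * p ≤ #S := by
  classical
  intro S hSmem
  have hppos : (0:ℝ) < p := by exact_mod_cast Nat.pos_of_ne_zero hp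
  set B : Set ℝ := (((↑) : ℝ → AddCircle (1:ℝ)) ⁻¹' K) ∩ Set.Ioc (0:ℝ) 1 with hBdef
  -- volume of B equals volume of K
  have hBmeas : MeasurableSet ((((↑) : ℝ → AddCircle (1:ℝ)) ⁻¹' K)) :=
    (hK.isClosed.preimage (AddCircle.continuous_mk' 1)).measurableSet
  have hBK : volume B = volume K := by
    have h := (AddCircle.measurePreserving_mk 1 0).measure_preimage
      hK.measurableSet.nullMeasurableSet
    rw [zero_add] at h
    rw [hBdef, ← Measure.restrict_apply hBmeas]
    exact h
  -- cover B by the p grid intervals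
  have hcover : B ⊆ ⋃ j ∈ Finset.range p, Set.Ioc ((j:ℝ)/p) (((j:ℝ)+1)/p) := by
    intro x hx
    obtain ⟨-, hx0, hx1⟩ := hx
    set n : ℕ := ⌈x * p⌉₊ with hn
    have hn1 : 1 ≤ n := by
      rw [hn, Nat.one_le_ceil_iff]
      positivity
    have hnp : n ≤ p := by
      rw [hn]
      exact Nat.ceil_le.mpr (by nlinarith)
    have hle : x * p ≤ n := Nat.le_ceil _
    have hlt : (n:ℝ) - 1 < x * p := by
      have := Nat.ceil_lt_add_one (by positivity : (0:ℝ) ≤ x * p)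
      rw [← hn] at this; linarith
    refine Set.mem_biUnion (Finset.mem_range.mpr (by omega : n - 1 < p)) ?_
    have hcast : ((n - 1 : ℕ) : ℝ) = (n : ℝ) - 1 := by
      push_cast [Nat.cast_sub hn1]; ring
    constructor
    · rw [hcast, div_lt_iff₀ hppos]; linarith
    · rw [hcast, le_div_iff₀ hppos]; linarith
  -- the set of grid intervals meeting B
  set T : Finset ℕ := (Finset.range p).filter
    (fun j => (B ∩ Set.Ioc ((j:ℝ)/p) (((j:ℝ)+1)/p)).Nonempty) with hT
  -- volume bound: vol K ≤ #T / p
  have hvol : volume K ≤ (#T : ENNReal) * ENNReal.ofReal (1/p) := by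
    rw [← hBK]
    have h1 : volume B ≤ ∑ j ∈ Finset.range p, volume (B ∩ Set.Ioc ((j:ℝ)/p) (((j:ℝ)+1)/p)) := by
      refine le_trans (measure_mono ?_) (measure_biUnion_finset_le _ _)
      intro x hx
      obtain ⟨j, hj, hj2⟩ := Set.mem_iUnion₂.mp (hcover hx)
      exact Set.mem_iUnion₂.mpr ⟨j, hj, ⟨hx, hj2⟩⟩
    refine h1.trans ?_
    have h2 : ∀ j ∈ Finset.range p, volume (B ∩ Set.Ioc ((j:ℝ)/p) (((j:ℝ)+1)/p)) ≤
        (if j ∈ T then ENNReal.ofReal (1/p) else 0) := by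
      intro j hj
      by_cases hjT : j ∈ T
      · simp only [hjT, if_true]
        refine le_trans (measure_mono Set.inter_subset_right) ?_
        rw [Real.volume_Ioc]
        apply le_of_eq
        congr 1
        field_simp
        ring
      · have : (B ∩ Set.Ioc ((j:ℝ)/p) (((j:ℝ)+1)/p)) = ∅ := by
          rw [hT] at hjT
          simp only [Finset.mem_filter, hj, true_and] at hjT
          exact Set.not_nonempty_iff_eq_empty.mp hjT
        simp [this]
    refine (Finset.sum_le_sum h2).trans ?_
    rw [Finset.sum_ite_mem, Finset.sum_const]
    simp [hT, Finset.filter_subset, Finset.inter_eq_right.mpr (Finset.filter_subset _ _)]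
  -- each j in T gives a grid point in A, hence in S
  haveI : NeZero p := ⟨hp⟩
  have hTS : #T ≤ #S := by
    refine Finset.card_le_card_of_injOn (fun j => ((j : ZMod p))) ?_ ?_
    · intro j hjT
      rw [hT, Finset.mem_coe, Finset.mem_filter] at hjT
      obtain ⟨x, hxB, hxI⟩ := hjT.2
      rw [Finset.mem_coe]
      apply hSmem
      rw [gridHom_natCast]
      have hxK : (x : AddCircle (1:ℝ)) ∈ K := hxB.1
      apply hthick
      refine Metric.mem_thickening_iff.mpr ⟨(x : AddCircle (1:ℝ)), hxK, ?_⟩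
      have hdist : dist (((j:ℝ)/p : ℝ) : AddCircle (1:ℝ)) ((x : ℝ) : AddCircle (1:ℝ))
          ≤ |(j:ℝ)/p - x| := by
        rw [dist_eq_norm]
        have he : (((j:ℝ)/p : ℝ) : AddCircle (1:ℝ)) - ((x : ℝ) : AddCircle (1:ℝ))
            = (((j:ℝ)/p - x : ℝ) : AddCircle (1:ℝ)) := rfl
        rw [he]
        exact QuotientAddGroup.norm_mk_le_norm.trans_eq (Real.norm_eq_abs _)
      refine hdist.trans_lt (lt_of_le_of_lt ?_ hpδ)
      rw [abs_le]
      obtain ⟨hx1, hx2⟩ := hxI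
      have h3 : ((j:ℝ)+1)/p = (j:ℝ)/p + 1/p := by ring
      have h4 : (0:ℝ) < 1/p := by positivity
      constructor <;> linarith
    · intro j hjT j' hjT' hjj'
      rw [hT, Finset.coe_filter] at hjT hjT'
      have hj : j < p := Finset.mem_range.mp (Set.mem_setOf.mp hjT).1
      have hj' : j' < p := Finset.mem_range.mp (Set.mem_setOf.mp hjT').1
      have := congrArg ZMod.val hjj'
      rwa [ZMod.val_cast_of_lt hj, ZMod.val_cast_of_lt hj'] at this
  -- conclude
  have hfin : ((#T : ENNReal) * ENNReal.ofReal (1/p)) ≠ ⊤ := by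
    exact ENNReal.mul_ne_top (by simp) ENNReal.ofReal_ne_top
  have := ENNReal.toReal_mono hfin hvol
  rw [ENNReal.toReal_mul, ENNReal.toReal_ofReal (by positivity), ENNReal.toReal_natCast] at this
  have hTcard : (#T : ℝ) ≤ (#S : ℝ) := by exact_mod_cast hTS
  calc (volume K).toReal * p ≤ ((#T : ℝ) * (1/p)) * p := by nlinarith
    _ = (#T : ℝ) := by field_simp
    _ ≤ (#S : ℝ) := hTcard

theorem measure_sum_free_le (k l : ℕ) (hl : 1 ≤ l) (hkl : l < k)
    (A : Set (AddCircle (1 : ℝ))) (hopen : IsOpen A)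
    (hA : ∀ (x : Fin k → AddCircle (1 : ℝ)) (y : Fin l → AddCircle (1 : ℝ)),
      (∀ i, x i ∈ A) → (∀ j, y j ∈ A) → ∑ i, x i ≠ ∑ j, y j) :
    volume A ≤ 1 / ((k : ENNReal) + l) := by
  classical
  by_contra hcon
  push_neg at hcon
  obtain ⟨K, hKA, hKc, hKm⟩ := hopen.exists_lt_isCompact hcon
  obtain ⟨δ, hδ, hthick⟩ := hKc.exists_thickening_subset_open hopen hKA
  set r : ℝ := (volume K).toReal with hrdef
  have hklpos : (0:ℝ) < (k:ℝ) + l := by positivity -- fix below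
  have hr : 1 / ((k:ℝ) + l) < r := by
    have hkne0 : ((k:ENNReal) + l) ≠ 0 := by
      simp only [ne_eq, add_eq_zero, Nat.cast_eq_zero, not_and]
      intro h; omega
    have h1 : (1 / ((k : ENNReal) + l)) ≠ ⊤ := by
      simp [ENNReal.div_eq_top, hkne0]
    have h2 : volume K ≠ ⊤ := measure_ne_top _ _
    have h3 := (ENNReal.toReal_lt_toReal h1 h2).mpr hKm
    have h4 : ((1:ENNReal) / ((k : ENNReal) + l)).toReal = 1 / ((k:ℝ)+l) := by
      rw [ENNReal.toReal_div, ENNReal.toReal_one,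
        ENNReal.toReal_add (by simp) (by simp), ENNReal.toReal_natCast, ENNReal.toReal_natCast]
    rw [hrdef]
    rw [h4] at h3
    exact h3
  have hrpos : 0 < r := lt_trans (by positivity) hr
  -- the per-prime bound
  have key : ∀ p : ℕ, p.Prime → 1 / (p:ℝ) < δ →
      ∃ s : ℕ, r * p ≤ s ∧ (k + l) * s + 2 ≤ p + (k + l) := by
    intro p hp hpδ
    haveI : NeZero p := ⟨hp.ne_zero⟩
    set φ := gridHom p hp.ne_zero with hφ
    set S : Finset (ZMod p) := Finset.univ.filter (fun z => φ z ∈ A) with hSdef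
    have hcount := count_lemma A K hKc δ hδ hthick p hp.ne_zero hpδ S
      (fun z hz => Finset.mem_filter.mpr ⟨Finset.mem_univ _, hz⟩)
    refine ⟨#S, hcount, ?_⟩
    -- S is nonempty
    have hppos' : (0:ℝ) < p := by exact_mod_cast hp.pos
    have hScard : 1 ≤ #S := by
      by_contra h
      push_neg at h
      have h0 : #S = 0 := by omega
      rw [h0] at hcount
      simp only [Nat.cast_zero] at hcount
      nlinarith
    have hSne : S.Nonempty := Finset.card_pos.mp hScard
    -- disjointness of sumsets
    have hdisj : Disjoint (k • S) (l • S) := by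
      rw [Finset.disjoint_left]
      intro z hzk hzl
      obtain ⟨f, hf, hfsum⟩ := mem_nsmul_finset_exists k S z hzk
      obtain ⟨g, hg, hgsum⟩ := mem_nsmul_finset_exists l S z hzl
      refine hA (fun i => φ (f i)) (fun j => φ (g j)) ?_ ?_ ?_
      · intro i; exact (Finset.mem_filter.mp (hf i)).2
      · intro j; exact (Finset.mem_filter.mp (hg j)).2
      · rw [← map_sum, ← map_sum, hfsum, hgsum]
    -- cardinality bounds
    have hk1 : 1 ≤ k := le_trans hl (le_of_lt hkl)
    have hkS := card_nsmul_ge hp S hSne k hk1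
    have hlS := card_nsmul_ge hp S hSne l hl
    have hkne : 1 ≤ #(k • S) := le_trans (le_min hp.one_lt.le (by omega)) hkS
    have hlne : 1 ≤ #(l • S) := le_trans (le_min hp.one_lt.le (by omega)) hlS
    have hunion : #(k • S) + #(l • S) ≤ p := by
      rw [← Finset.card_union_of_disjoint hdisj]
      calc #((k • S) ∪ (l • S)) ≤ Fintype.card (ZMod p) := Finset.card_le_univ _
        _ = p := ZMod.card p
    obtain ⟨m, hm⟩ : ∃ m, #S = m + 1 := ⟨#S - 1, by omega⟩
    have e1 : k * (#S - 1) = k * m := by rw [hm]; simp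
    have e2 : l * (#S - 1) = l * m := by rw [hm]; simp
    have e3 : (k + l) * #S = k * m + l * m + (k + l) := by rw [hm]; ring
    omega
  -- choose a large prime
  set e : ℝ := ((k:ℝ) + l) * r - 1 with hedef
  have hepos : 0 < e := by
    rw [hedef]
    rw [div_lt_iff₀ hklpos] at hr
    linarith
  obtain ⟨p, hpN, hp⟩ := Nat.exists_infinite_primes
    (max (⌈((k:ℝ)+l) / e⌉₊ + 1) (⌈1/δ⌉₊ + 1))
  have hp1 : (⌈((k:ℝ)+l) / e⌉₊ + 1 : ℕ) ≤ p := le_trans (le_max_left _ _) hpN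
  have hp2 : (⌈1/δ⌉₊ + 1 : ℕ) ≤ p := le_trans (le_max_right _ _) hpN
  have hppos : (0:ℝ) < p := by exact_mod_cast hp.pos
  have hpδ : 1 / (p:ℝ) < δ := by
    have h1 : 1/δ < (p:ℝ) := by
      have := Nat.lt_of_ceil_lt (show ⌈1/δ⌉₊ < p by omega)
      exact this
    rw [div_lt_iff₀ hppos]
    rw [div_lt_iff₀ hδ] at h1
    linarith
  obtain ⟨s, hs1, hs2⟩ := key p hp hpδ
  -- final contradiction
  have hpe : ((k:ℝ)+l) / e < p := Nat.lt_of_ceil_lt (show ⌈((k:ℝ)+l)/e⌉₊ < p by omega)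
  have hs2' : ((k:ℝ) + l) * s + 2 ≤ (p:ℝ) + ((k:ℝ) + l) := by exact_mod_cast hs2
  have hchain : e * p ≤ (k:ℝ) + l - 2 := by
    have h1 : ((k:ℝ) + l) * (r * p) ≤ ((k:ℝ) + l) * s := by nlinarith
    calc e * p = ((k:ℝ)+l) * (r * p) - p := by rw [hedef]; ring
      _ ≤ ((k:ℝ)+l) * s - p := by linarith
      _ ≤ (k:ℝ) + l - 2 := by linarith
  rw [div_lt_iff₀ hepos] at hpe
  nlinarith
end

section
/- Let k > ℓ ≥ 1 be integers. Then every set A of N positive integers contains a (k,ℓ)-sum-free subset S with |S| ≥ N/(k+ℓ). -/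
open Finset

private abbrev SFcond (k l D p r : ℕ) : Prop := l * p < D * r ∧ D * r ≤ k * p

private lemma core_mod (k l p : ℕ) (hl : 1 ≤ l) (hkl : l < k) (hp : 0 < p)
    (R T : ℕ)
    (hR1 : k * (l * p) < (k - l) * (k + l) * R) (hR2 : (k - l) * (k + l) * R ≤ k * (k * p))
    (hT1 : l * (l * p) < (k - l) * (k + l) * T) (hT2 : (k - l) * (k + l) * T ≤ l * (k * p))
    (hmod : R ≡ T [MOD p]) : False := by
  set D := (k - l) * (k + l) with hD
  have hDpos : 0 < D := Nat.mul_pos (by omega) (by omega)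
  have hkey : l * l + D = k * k := by
    obtain ⟨d, rfl⟩ := Nat.exists_eq_add_of_le hkl.le
    rw [hD, Nat.add_sub_cancel_left]
    ring
  have hTR : T < R := by
    have h1 : D * T ≤ k * (l * p) := by
      calc D * T ≤ l * (k * p) := hT2
        _ = k * (l * p) := by ring
    have := lt_of_le_of_lt h1 hR1
    exact lt_of_mul_lt_mul_left this (Nat.zero_le D)
  obtain ⟨m, hm⟩ := (Nat.modEq_iff_dvd' hTR.le).mp hmod.symm
  have hm1 : 1 ≤ m := by
    rcases Nat.eq_zero_or_pos m with rfl | h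
    · rw [mul_zero] at hm; omega
    · exact h
  have hRT : R = T + p * m := by omega
  have h2 : D * R = D * T + D * (p * m) := by rw [hRT]; ring
  have h3 : D * p ≤ D * (p * m) := by
    calc D * p = D * (p * 1) := by ring
      _ ≤ D * (p * m) := Nat.mul_le_mul_left D (Nat.mul_le_mul_left p hm1)
  have h4 : l * (l * p) + D * p < k * (k * p) := by
    calc l * (l * p) + D * p ≤ l * (l * p) + D * (p * m) := by omega
      _ < D * T + D * (p * m) := by omega
      _ = D * R := h2.symm
      _ ≤ k * (k * p) := hR2
  have h5 : l * (l * p) + D * p = k * (k * p) := by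
    calc l * (l * p) + D * p = (l * l + D) * p := by ring
      _ = k * k * p := by rw [hkey]
      _ = k * (k * p) := by ring
  omega

theorem exists_sum_free_subset (k l : ℕ) (hl : 1 ≤ l) (hkl : l < k)
    (N : ℕ) (A : Finset ℕ) (hpos : ∀ a ∈ A, 0 < a) (hcard : A.card = N) :
    ∃ S ⊆ A,
      (∀ (x : Fin k → ℕ) (y : Fin l → ℕ),
        (∀ i, x i ∈ S) → (∀ j, y j ∈ S) → ∑ i, x i ≠ ∑ j, y j) ∧
      (N : ℝ) / ((k : ℝ) + l) ≤ S.card := by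
  obtain ⟨p, hp, hgt, hmod⟩ :=
    Nat.exists_prime_gt_modEq_one (k := k + l) (A.sup id) (by omega)
  haveI : Fact p.Prime := ⟨hp⟩
  have hp0 : 0 < p := hp.pos
  have hp1 : 1 < p := hp.one_lt
  set D := (k - l) * (k + l) with hD
  have hDpos : 0 < D := Nat.mul_pos (by omega) (by omega)
  have hkD : k < D := by
    have : 1 * (k + l) ≤ (k - l) * (k + l) := Nat.mul_le_mul_right _ (by omega)
    omega
  have hAne : ∀ n ∈ A, (n : ZMod p) ≠ 0 := by
    intro n hn h0
    rw [ZMod.natCast_eq_zero_iff] at h0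
    have h1 : n ≤ A.sup id := Finset.le_sup (f := id) hn
    have := Nat.le_of_dvd (hpos n hn) h0
    omega
  set m0 := p / (k + l) with hm0
  have hpm : p = (k + l) * m0 + 1 := by
    have h1 : p % (k + l) = 1 % (k + l) := hmod
    have h2 : 1 % (k + l) = 1 := Nat.mod_eq_of_lt (by omega)
    have h3 := Nat.div_add_mod p (k + l)
    rw [← hm0] at h3
    omega
  have hkpD : k * p / D < p := by
    rw [Nat.div_lt_iff_lt_mul hDpos]
    calc k * p < D * p := Nat.mul_lt_mul_of_pos_right hkD hp0
      _ = p * D := mul_comm _ _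
  set J : Finset (ZMod p) := Finset.univ.filter (fun y : ZMod p => SFcond k l D p y.val)
    with hJ
  have hJcard : m0 ≤ J.card := by
    have hsub : m0 ≤ k * p / D - l * p / D := by
      have h1 : (k - l) * p / D = m0 := by
        rw [hD, hm0, Nat.mul_div_mul_left _ _ (show 0 < k - l by omega)]
      have h2 : l * p / D + (k - l) * p / D ≤ k * p / D := by
        rw [Nat.le_div_iff_mul_le hDpos]
        have h3 : l * p / D * D ≤ l * p := Nat.div_mul_le_self _ _
        have h4 : (k - l) * p / D * D ≤ (k - l) * p := Nat.div_mul_le_self _ _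
        have h5 : l * p + (k - l) * p = k * p := by
          obtain ⟨d, rfl⟩ := Nat.exists_eq_add_of_le hkl.le
          rw [Nat.add_sub_cancel_left]; ring
        calc (l * p / D + (k - l) * p / D) * D
            = l * p / D * D + (k - l) * p / D * D := by ring
          _ ≤ l * p + (k - l) * p := by omega
          _ = k * p := h5
      omega
    have hIoc : (Finset.Ioc (l * p / D) (k * p / D)).card = k * p / D - l * p / D :=
      Nat.card_Ioc _ _
    have hmem : ∀ r ∈ Finset.Ioc (l * p / D) (k * p / D), ((r : ZMod p) ∈ J) := by
      intro r hr
      rw [Finset.mem_Ioc] at hr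
      have hrp : r < p := by omega
      have hval : ((r : ZMod p)).val = r := ZMod.val_cast_of_lt hrp
      rw [hJ, Finset.mem_filter, hval]
      refine ⟨Finset.mem_univ _, ?_, ?_⟩
      · have h6 := hr.1
        rw [Nat.div_lt_iff_lt_mul hDpos] at h6
        calc l * p < r * D := h6
          _ = D * r := mul_comm _ _
      · have h7 := (Nat.le_div_iff_mul_le hDpos).mp hr.2
        calc D * r = r * D := mul_comm _ _
          _ ≤ k * p := h7
    have hcard_le : (Finset.Ioc (l * p / D) (k * p / D)).card ≤ J.card := by
      apply Finset.card_le_card_of_injOn (fun r : ℕ => (r : ZMod p)) hmem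
      intro a ha b hb hab
      rw [Finset.mem_coe, Finset.mem_Ioc] at ha hb
      have hap : a < p := by omega
      have hbp : b < p := by omega
      have := congrArg ZMod.val hab
      rwa [ZMod.val_cast_of_lt hap, ZMod.val_cast_of_lt hbp] at this
    omega
  have hcount : ∀ n ∈ A,
      (Finset.univ.filter
        (fun x : ZMod p => SFcond k l D p (((n : ZMod p) * x).val))).card = J.card := by
    intro n hn
    have hn0 : (n : ZMod p) ≠ 0 := hAne n hn
    apply Finset.card_bij' (fun x _ => (n : ZMod p) * x) (fun y _ => (n : ZMod p)⁻¹ * y)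
    · intro x hx
      rw [Finset.mem_filter] at hx
      rw [hJ, Finset.mem_filter]
      exact ⟨Finset.mem_univ _, hx.2⟩
    · intro y hy
      rw [hJ, Finset.mem_filter] at hy
      rw [Finset.mem_filter]
      refine ⟨Finset.mem_univ _, ?_⟩
      rw [← mul_assoc, mul_inv_cancel₀ hn0, one_mul]
      exact hy.2
    · intro x _
      rw [← mul_assoc, inv_mul_cancel₀ hn0, one_mul]
    · intro y _
      rw [← mul_assoc, mul_inv_cancel₀ hn0, one_mul]
  set f : ZMod p → ℕ :=
    fun x => (A.filter (fun n : ℕ => SFcond k l D p (((n : ZMod p) * x).val))).card with hf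
  have htotal : ∑ x : ZMod p, f x = N * J.card := by
    calc ∑ x : ZMod p, f x
        = ∑ x : ZMod p, ∑ n ∈ A,
            if SFcond k l D p (((n : ZMod p) * x).val) then 1 else 0 := by
          exact Finset.sum_congr rfl fun x _ => Finset.card_filter _ _
      _ = ∑ n ∈ A, ∑ x : ZMod p,
            if SFcond k l D p (((n : ZMod p) * x).val) then 1 else 0 := Finset.sum_comm
      _ = ∑ n ∈ A, (Finset.univ.filter
            (fun x : ZMod p => SFcond k l D p (((n : ZMod p) * x).val))).card :=
          Finset.sum_congr rfl fun n _ => (Finset.card_filter _ _).symm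
      _ = ∑ n ∈ A, J.card := Finset.sum_congr rfl hcount
      _ = N * J.card := by rw [Finset.sum_const, hcard, smul_eq_mul]
  have hf0 : f 0 = 0 := by
    simp only [hf, mul_zero, ZMod.val_zero]
    rw [Finset.card_eq_zero, Finset.filter_eq_empty_iff]
    intro n _ hc
    have hc1 := hc.1
    omega
  have hps : (Finset.univ.erase (0 : ZMod p)).card = p - 1 := by
    rw [Finset.card_erase_of_mem (Finset.mem_univ _), Finset.card_univ, ZMod.card]
  have hsum_erase : ∑ x ∈ Finset.univ.erase (0 : ZMod p), f x = N * J.card := by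
    rw [Finset.sum_erase _ hf0]; exact htotal
  have hexists : ∃ x ∈ Finset.univ.erase (0 : ZMod p), N ≤ (k + l) * f x := by
    by_contra h
    push_neg at h
    have hne : (Finset.univ.erase (0 : ZMod p)).Nonempty :=
      ⟨1, Finset.mem_erase.mpr ⟨one_ne_zero, Finset.mem_univ _⟩⟩
    have hlt : ∑ x ∈ Finset.univ.erase (0 : ZMod p), (k + l) * f x
        < ∑ x ∈ Finset.univ.erase (0 : ZMod p), N :=
      Finset.sum_lt_sum_of_nonempty hne h
    rw [Finset.sum_const, hps, smul_eq_mul, ← Finset.mul_sum, hsum_erase] at hlt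
    have hge : (p - 1) * N ≤ (k + l) * (N * J.card) := by
      have e1 : (p - 1) * N = N * ((k + l) * m0) := by
        rw [hpm, Nat.add_sub_cancel]; ring
      calc (p - 1) * N = N * ((k + l) * m0) := e1
        _ ≤ N * ((k + l) * J.card) :=
            Nat.mul_le_mul_left N (Nat.mul_le_mul_left _ hJcard)
        _ = (k + l) * (N * J.card) := by ring
    omega
  obtain ⟨x, _, hx⟩ := hexists
  refine ⟨A.filter (fun n : ℕ => SFcond k l D p (((n : ZMod p) * x).val)),
    Finset.filter_subset _ _, ?_, ?_⟩
  · intro a b ha hb heq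
    have hr : ∀ i, SFcond k l D p (((a i : ZMod p) * x).val) := fun i =>
      (Finset.mem_filter.mp (ha i)).2
    have ht : ∀ j, SFcond k l D p (((b j : ZMod p) * x).val) := fun j =>
      (Finset.mem_filter.mp (hb j)).2
    set R := ∑ i, ((a i : ZMod p) * x).val with hR
    set T := ∑ j, ((b j : ZMod p) * x).val with hT
    have e1 : ((R : ℕ) : ZMod p) = ((∑ i, a i : ℕ) : ZMod p) * x := by
      rw [hR, Nat.cast_sum]
      simp only [ZMod.natCast_zmod_val]
      rw [← Finset.sum_mul, Nat.cast_sum]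
    have e2 : ((T : ℕ) : ZMod p) = ((∑ j, b j : ℕ) : ZMod p) * x := by
      rw [hT, Nat.cast_sum]
      simp only [ZMod.natCast_zmod_val]
      rw [← Finset.sum_mul, Nat.cast_sum]
    have hmodRT : R ≡ T [MOD p] := by
      rw [← ZMod.natCast_eq_natCast_iff, e1, e2, heq]
    have hR1 : k * (l * p) < D * R := by
      have hlt := Finset.sum_lt_sum_of_nonempty
        (s := (Finset.univ : Finset (Fin k)))
        (f := fun _ : Fin k => l * p)
        (g := fun i : Fin k => D * ((a i : ZMod p) * x).val)
        ⟨⟨0, by omega⟩, Finset.mem_univ _⟩ (fun i _ => (hr i).1)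
      rw [Finset.sum_const, Finset.card_univ, Fintype.card_fin, smul_eq_mul,
        ← Finset.mul_sum] at hlt
      exact hlt
    have hR2 : D * R ≤ k * (k * p) := by
      have hle := Finset.sum_le_sum
        (s := (Finset.univ : Finset (Fin k)))
        (f := fun i : Fin k => D * ((a i : ZMod p) * x).val)
        (g := fun _ : Fin k => k * p) (fun i _ => (hr i).2)
      rw [Finset.sum_const, Finset.card_univ, Fintype.card_fin, smul_eq_mul,
        ← Finset.mul_sum] at hle
      exact hle
    have hT1 : l * (l * p) < D * T := by
      have hlt := Finset.sum_lt_sum_of_nonempty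
        (s := (Finset.univ : Finset (Fin l)))
        (f := fun _ : Fin l => l * p)
        (g := fun j : Fin l => D * ((b j : ZMod p) * x).val)
        ⟨⟨0, by omega⟩, Finset.mem_univ _⟩ (fun j _ => (ht j).1)
      rw [Finset.sum_const, Finset.card_univ, Fintype.card_fin, smul_eq_mul,
        ← Finset.mul_sum] at hlt
      exact hlt
    have hT2 : D * T ≤ l * (k * p) := by
      have hle := Finset.sum_le_sum
        (s := (Finset.univ : Finset (Fin l)))
        (f := fun j : Fin l => D * ((b j : ZMod p) * x).val)
        (g := fun _ : Fin l => k * p) (fun j _ => (ht j).2)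
      rw [Finset.sum_const, Finset.card_univ, Fintype.card_fin, smul_eq_mul,
        ← Finset.mul_sum] at hle
      exact hle
    exact core_mod k l p hl hkl hp0 R T (hD ▸ hR1) (hD ▸ hR2) (hD ▸ hT1) (hD ▸ hT2) hmodRT
  · rw [div_le_iff₀ (by positivity)]
    have h1 := hx
    simp only [hf] at h1
    have h2 : (N : ℝ) ≤ (((k + l) : ℕ) : ℝ) *
        ((A.filter (fun n : ℕ => SFcond k l D p (((n : ZMod p) * x).val))).card : ℕ) := by
      exact_mod_cast h1
    push_cast at h2
    linarith
end

section
/- Let k > ℓ ≥ 1, let C ⊆ ℤ, and suppose there exist a₁, …, a_ℓ, b₁, …, b_k ∈ C with a₁ + ⋯ + a_ℓ = b₁ + ⋯ + b_k. Let P = C \ (ℓC − (k−1)C), where jC is the j-fold sumset. For u = 1, …, k define M(u) = P + b₀ + b₁ + ⋯ + b_{k−u} + (u−1)a₁ (with b₀ = 0), and for v = 1, …, ℓ define N(v) = P + a₀ + a₁ + ⋯ + a_{ℓ−v} + (v−1)b₁ (with a₀ = 0). Then the k + ℓ sets M(1), …, M(k), N(1), …, N(ℓ) are pairwise disjoint.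 -/
open Finset

lemma exists_fin_of_multiset : ∀ (n : ℕ) (S : Multiset ℤ), S.card = n →
    ∃ y : Fin n → ℤ, (∀ i, y i ∈ S) ∧ ∑ i, y i = S.sum := by
  intro n
  induction n with
  | zero => intro S h; exact ⟨fun i => 0, fun i => i.elim0, by
      simp [Multiset.card_eq_zero.mp h]⟩
  | succ n ih =>
    intro S h
    obtain ⟨x, hx⟩ := Multiset.card_pos_iff_exists_mem.mp (by rw [h]; exact Nat.succ_pos n)
    obtain ⟨S', rfl⟩ := Multiset.exists_cons_of_mem hx
    obtain ⟨y', hy'mem, hy'sum⟩ := ih S' (by simpa using h)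
    refine ⟨Fin.cons x y', fun i => ?_, ?_⟩
    · refine Fin.cases ?_ ?_ i
      · simp
      · intro j; simp only [Fin.cons_succ]
        exact Multiset.mem_cons_of_mem (hy'mem j)
    · rw [Fin.sum_cons, hy'sum, Multiset.sum_cons]

theorem M_N_pairwise_disjoint (k l : ℕ) (hl : 1 ≤ l) (hkl : l < k)
    (C : Set ℤ) (a b : ℕ → ℤ) (ha0 : a 0 = 0) (hb0 : b 0 = 0)
    (ha : ∀ i ∈ Finset.Icc 1 l, a i ∈ C) (hb : ∀ j ∈ Finset.Icc 1 k, b j ∈ C)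
    (heq : ∑ i ∈ Finset.Icc 1 l, a i = ∑ j ∈ Finset.Icc 1 k, b j)
    (P : Set ℤ)
    (hP : P = {c ∈ C | ¬ ∃ (y : Fin l → ℤ) (z : Fin (k - 1) → ℤ),
      (∀ i, y i ∈ C) ∧ (∀ j, z j ∈ C) ∧ c = (∑ i, y i) - (∑ j, z j)})
    (M N : ℕ → Set ℤ)
    (hM : ∀ u, M u = {x | ∃ p ∈ P,
      x = p + (∑ j ∈ Finset.Icc 1 (k - u), b j) + ((u - 1 : ℕ) : ℤ) * a 1})
    (hN : ∀ v, N v = {x | ∃ p ∈ P,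
      x = p + (∑ i ∈ Finset.Icc 1 (l - v), a i) + ((v - 1 : ℕ) : ℤ) * b 1}) :
    (∀ u₁ ∈ Finset.Icc 1 k, ∀ u₂ ∈ Finset.Icc 1 k, u₁ ≠ u₂ → Disjoint (M u₁) (M u₂)) ∧
    (∀ v₁ ∈ Finset.Icc 1 l, ∀ v₂ ∈ Finset.Icc 1 l, v₁ ≠ v₂ → Disjoint (N v₁) (N v₂)) ∧
    (∀ u ∈ Finset.Icc 1 k, ∀ v ∈ Finset.Icc 1 l, Disjoint (M u) (N v)) := by
  subst hP
  have a1C : a 1 ∈ C := ha 1 (by simp [Finset.mem_Icc]; omega)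
  have b1C : b 1 ∈ C := hb 1 (by simp [Finset.mem_Icc]; omega)
  have hIoc : ∀ m : ℕ, Finset.Icc 1 m = Finset.Ioc 0 m := by
    intro m; ext x; simp only [Finset.mem_Icc, Finset.mem_Ioc]; omega
  -- a p in P admits no representation as (sum of l elts of C) - (sum of k-1 elts of C)
  have hPrep : ∀ p ∈ {c ∈ C | ¬ ∃ (y : Fin l → ℤ) (z : Fin (k - 1) → ℤ),
      (∀ i, y i ∈ C) ∧ (∀ j, z j ∈ C) ∧ c = (∑ i, y i) - (∑ j, z j)},
      ∀ (Y Z : Multiset ℤ), Y.card = l → Z.card = k - 1 →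
      (∀ x ∈ Y, x ∈ C) → (∀ x ∈ Z, x ∈ C) → p ≠ Y.sum - Z.sum := by
    intro p hp Y Z hYc hZc hYC hZC hrep
    obtain ⟨y, hy, hysum⟩ := exists_fin_of_multiset l Y hYc
    obtain ⟨z, hz, hzsum⟩ := exists_fin_of_multiset (k - 1) Z hZc
    exact hp.2 ⟨y, z, fun i => hYC _ (hy i), fun j => hZC _ (hz j), by
      rw [hysum, hzsum]; exact hrep⟩
  -- M case
  have keyM : ∀ u₁ u₂ : ℕ, 1 ≤ u₁ → u₂ ≤ k → u₁ < u₂ →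
      ∀ x, x ∈ M u₁ → x ∈ M u₂ → False := by
    intro u₁ u₂ hu₁ hu₂ hlt x hx₁ hx₂
    rw [hM u₁] at hx₁; rw [hM u₂] at hx₂
    obtain ⟨p₁, hp₁, he₁⟩ := hx₁
    obtain ⟨p₂, hp₂, he₂⟩ := hx₂
    have c₁ : ((u₁ - 1 : ℕ) : ℤ) = (u₁ : ℤ) - 1 := by omega
    have c₂ : ((u₂ - 1 : ℕ) : ℤ) = (u₂ : ℤ) - 1 := by omega
    rw [c₁] at he₁; rw [c₂] at he₂
    set S : Finset ℕ := Finset.Ioc (k - u₂) (k - u₁) with hSdef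
    have hS : S ⊆ Finset.Icc 1 k := by
      intro j hj; rw [hSdef, Finset.mem_Ioc] at hj; rw [Finset.mem_Icc]; omega
    set Y : Multiset ℤ := p₁ ::ₘ (Finset.Icc 2 l).val.map a with hYdef
    set Z : Multiset ℤ := Multiset.replicate (u₂ - u₁ - 1) (a 1)
      + (Finset.Icc 1 k \ S).val.map b with hZdef
    have hYc : Y.card = l := by
      rw [hYdef]; simp [Nat.card_Icc]; omega
    have hZc : Z.card = k - 1 := by
      rw [hZdef]; simp only [Multiset.card_add, Multiset.card_replicate,
        Multiset.card_map, Finset.card_val, Finset.card_sdiff_of_subset (s := Finset.Ioc (k - u₂) (k - u₁)) hS, Nat.card_Icc,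
        Nat.card_Ioc, hSdef]
      omega
    have hYC : ∀ t ∈ Y, t ∈ C := by
      intro t ht
      rw [hYdef] at ht
      rcases Multiset.mem_cons.mp ht with h | h
      · exact h ▸ hp₁.1
      · obtain ⟨i, hi, rfl⟩ := Multiset.mem_map.mp h
        rw [Finset.mem_val, Finset.mem_Icc] at hi
        exact ha i (by rw [Finset.mem_Icc]; omega)
    have hZC : ∀ t ∈ Z, t ∈ C := by
      intro t ht
      rw [hZdef] at ht
      rcases Multiset.mem_add.mp ht with h | h
      · rw [Multiset.eq_of_mem_replicate h]; exact a1C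
      · obtain ⟨j, hj, rfl⟩ := Multiset.mem_map.mp h
        rw [Finset.mem_val] at hj
        exact hb j (Finset.sdiff_subset hj)
    refine hPrep p₂ hp₂ Y Z hYc hZc hYC hZC ?_
    have hYs : Y.sum = p₁ + ∑ i ∈ Finset.Icc 2 l, a i := by
      rw [hYdef, Multiset.sum_cons]; rfl
    have hZs : Z.sum = ((u₂ : ℤ) - u₁ - 1) * a 1 + ∑ j ∈ Finset.Icc 1 k \ S, b j := by
      have c₃ : ((u₂ - u₁ - 1 : ℕ) : ℤ) = (u₂ : ℤ) - u₁ - 1 := by omega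
      rw [hZdef, Multiset.sum_add, Multiset.sum_replicate, nsmul_eq_mul, c₃]; rfl
    rw [hYs, hZs]
    have hA : ∑ i ∈ Finset.Icc 1 l, a i = a 1 + ∑ i ∈ Finset.Icc 2 l, a i := by
      have h1l : Finset.Icc 1 l = insert 1 (Finset.Icc 2 l) := by
        ext x; simp only [Finset.mem_Icc, Finset.mem_insert]; omega
      rw [h1l, Finset.sum_insert (by simp)]
    have hB : ∑ j ∈ Finset.Icc 1 (k - u₁), b j
        = (∑ j ∈ Finset.Icc 1 (k - u₂), b j) + ∑ j ∈ S, b j := by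
      rw [hIoc, hIoc, hSdef]
      exact (Finset.sum_Ioc_consecutive b (Nat.zero_le _) (by omega)).symm
    have hC2 : ∑ j ∈ Finset.Icc 1 k, b j
        = (∑ j ∈ S, b j) + ∑ j ∈ Finset.Icc 1 k \ S, b j := by
      rw [add_comm]; exact (Finset.sum_sdiff hS).symm
    linear_combination he₁ - he₂ + hB - hC2 + hA - heq
  -- N case
  have keyN : ∀ v₁ v₂ : ℕ, 1 ≤ v₁ → v₂ ≤ l → v₁ < v₂ →
      ∀ x, x ∈ N v₁ → x ∈ N v₂ → False := by
    intro v₁ v₂ hv₁ hv₂ hlt x hx₁ hx₂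
    rw [hN v₁] at hx₁; rw [hN v₂] at hx₂
    obtain ⟨p₁, hp₁, he₁⟩ := hx₁
    obtain ⟨p₂, hp₂, he₂⟩ := hx₂
    have c₁ : ((v₁ - 1 : ℕ) : ℤ) = (v₁ : ℤ) - 1 := by omega
    have c₂ : ((v₂ - 1 : ℕ) : ℤ) = (v₂ : ℤ) - 1 := by omega
    rw [c₁] at he₁; rw [c₂] at he₂
    set T : Finset ℕ := Finset.Ioc (l - v₂) (l - v₁) with hTdef
    have hT : T ⊆ Finset.Ioc 0 l := by
      intro i hi; rw [hTdef, Finset.mem_Ioc] at hi; rw [Finset.mem_Ioc]; omega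
    set Y : Multiset ℤ := p₂ ::ₘ (Multiset.replicate (v₂ - v₁ - 1) (b 1)
      + (Finset.Ioc 0 l \ T).val.map a) with hYdef
    set Z : Multiset ℤ := (Finset.Icc 2 k).val.map b with hZdef
    have hYc : Y.card = l := by
      rw [hYdef]
      simp only [Multiset.card_cons, Multiset.card_add, Multiset.card_replicate,
        Multiset.card_map, Finset.card_val, Finset.card_sdiff_of_subset (s := Finset.Ioc (l - v₂) (l - v₁)) hT, Nat.card_Ioc, hTdef]
      omega
    have hZc : Z.card = k - 1 := by
      rw [hZdef]; simp [Nat.card_Icc]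
    have hYC : ∀ t ∈ Y, t ∈ C := by
      intro t ht
      rw [hYdef] at ht
      rcases Multiset.mem_cons.mp ht with h | h
      · exact h ▸ hp₂.1
      · rcases Multiset.mem_add.mp h with h' | h'
        · rw [Multiset.eq_of_mem_replicate h']; exact b1C
        · obtain ⟨i, hi, rfl⟩ := Multiset.mem_map.mp h'
          rw [Finset.mem_val] at hi
          have := Finset.sdiff_subset hi
          rw [Finset.mem_Ioc] at this
          exact ha i (by rw [Finset.mem_Icc]; omega)
    have hZC : ∀ t ∈ Z, t ∈ C := by
      intro t ht
      rw [hZdef] at ht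
      obtain ⟨j, hj, rfl⟩ := Multiset.mem_map.mp ht
      rw [Finset.mem_val, Finset.mem_Icc] at hj
      exact hb j (by rw [Finset.mem_Icc]; omega)
    refine hPrep p₁ hp₁ Y Z hYc hZc hYC hZC ?_
    have hYs : Y.sum = p₂ + (((v₂ : ℤ) - v₁ - 1) * b 1
        + ∑ i ∈ Finset.Ioc 0 l \ T, a i) := by
      have c₃ : ((v₂ - v₁ - 1 : ℕ) : ℤ) = (v₂ : ℤ) - v₁ - 1 := by omega
      rw [hYdef, Multiset.sum_cons, Multiset.sum_add, Multiset.sum_replicate, nsmul_eq_mul, c₃]; rfl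
    have hZs : Z.sum = ∑ j ∈ Finset.Icc 2 k, b j := rfl
    rw [hYs, hZs]
    have hA2 : ∑ i ∈ Finset.Icc 1 (l - v₁), a i
        = (∑ i ∈ Finset.Icc 1 (l - v₂), a i) + ∑ i ∈ T, a i := by
      rw [hIoc, hIoc, hTdef]
      exact (Finset.sum_Ioc_consecutive a (Nat.zero_le _) (by omega)).symm
    have hC3 : ∑ i ∈ Finset.Ioc 0 l, a i
        = (∑ i ∈ T, a i) + ∑ i ∈ Finset.Ioc 0 l \ T, a i := by
      rw [add_comm]; exact (Finset.sum_sdiff hT).symm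
    have hBfull : ∑ j ∈ Finset.Icc 1 k, b j = b 1 + ∑ j ∈ Finset.Icc 2 k, b j := by
      have h1k : Finset.Icc 1 k = insert 1 (Finset.Icc 2 k) := by
        ext x; simp only [Finset.mem_Icc, Finset.mem_insert]; omega
      rw [h1k, Finset.sum_insert (by simp)]
    have heq' : ∑ i ∈ Finset.Ioc 0 l, a i = ∑ j ∈ Finset.Icc 1 k, b j := by
      rw [← hIoc]; exact heq
    linear_combination he₂ - he₁ - hA2 + hC3 - heq' - hBfull
  -- cross case
  have keyMN : ∀ u v : ℕ, 1 ≤ u → u ≤ k → 1 ≤ v → v ≤ l →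
      ∀ x, x ∈ M u → x ∈ N v → False := by
    intro u v hu1 huk hv1 hvl x hx₁ hx₂
    rw [hM u] at hx₁; rw [hN v] at hx₂
    obtain ⟨p₁, hp₁, he₁⟩ := hx₁
    obtain ⟨p₂, hp₂, he₂⟩ := hx₂
    have c₁ : ((u - 1 : ℕ) : ℤ) = (u : ℤ) - 1 := by omega
    have c₂ : ((v - 1 : ℕ) : ℤ) = (v : ℤ) - 1 := by omega
    rw [c₁] at he₁; rw [c₂] at he₂
    set Y : Multiset ℤ := p₂ ::ₘ (Multiset.replicate (v - 1) (b 1)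
      + (Finset.Icc 1 (l - v)).val.map a) with hYdef
    set Z : Multiset ℤ := Multiset.replicate (u - 1) (a 1)
      + (Finset.Icc 1 (k - u)).val.map b with hZdef
    have hYc : Y.card = l := by
      rw [hYdef]; simp [Nat.card_Icc]; omega
    have hZc : Z.card = k - 1 := by
      rw [hZdef]; simp [Nat.card_Icc]; omega
    have hYC : ∀ t ∈ Y, t ∈ C := by
      intro t ht
      rw [hYdef] at ht
      rcases Multiset.mem_cons.mp ht with h | h
      · exact h ▸ hp₂.1
      · rcases Multiset.mem_add.mp h with h' | h'
        · rw [Multiset.eq_of_mem_replicate h']; exact b1C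
        · obtain ⟨i, hi, rfl⟩ := Multiset.mem_map.mp h'
          rw [Finset.mem_val, Finset.mem_Icc] at hi
          exact ha i (by rw [Finset.mem_Icc]; omega)
    have hZC : ∀ t ∈ Z, t ∈ C := by
      intro t ht
      rw [hZdef] at ht
      rcases Multiset.mem_add.mp ht with h | h
      · rw [Multiset.eq_of_mem_replicate h]; exact a1C
      · obtain ⟨j, hj, rfl⟩ := Multiset.mem_map.mp h
        rw [Finset.mem_val, Finset.mem_Icc] at hj
        exact hb j (by rw [Finset.mem_Icc]; omega)
    refine hPrep p₁ hp₁ Y Z hYc hZc hYC hZC ?_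
    have hYs : Y.sum = p₂ + (((v : ℤ) - 1) * b 1
        + ∑ i ∈ Finset.Icc 1 (l - v), a i) := by
      rw [hYdef, Multiset.sum_cons, Multiset.sum_add, Multiset.sum_replicate, nsmul_eq_mul, c₂]; rfl
    have hZs : Z.sum = ((u : ℤ) - 1) * a 1 + ∑ j ∈ Finset.Icc 1 (k - u), b j := by
      rw [hZdef, Multiset.sum_add, Multiset.sum_replicate, nsmul_eq_mul, c₁]; rfl
    rw [hYs, hZs]
    linear_combination he₂ - he₁
  refine ⟨?_, ?_, ?_⟩
  · intro u₁ h₁ u₂ h₂ hne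
    rw [Finset.mem_Icc] at h₁ h₂
    rw [Set.disjoint_left]
    intro x hx₁ hx₂
    rcases lt_or_gt_of_ne hne with h | h
    · exact keyM u₁ u₂ h₁.1 h₂.2 h x hx₁ hx₂
    · exact keyM u₂ u₁ h₂.1 h₁.2 h x hx₂ hx₁
  · intro v₁ h₁ v₂ h₂ hne
    rw [Finset.mem_Icc] at h₁ h₂
    rw [Set.disjoint_left]
    intro x hx₁ hx₂
    rcases lt_or_gt_of_ne hne with h | h
    · exact keyN v₁ v₂ h₁.1 h₂.2 h x hx₁ hx₂
    · exact keyN v₂ v₁ h₂.1 h₁.2 h x hx₂ hx₁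
  · intro u hu v hv
    rw [Finset.mem_Icc] at hu hv
    rw [Set.disjoint_left]
    intro x hx₁ hx₂
    exact keyMN u v hu.1 hu.2 hv.1 hv.2 x hx₁ hx₂
end

section
/- Let A ⊆ ℕ be a set of positive integers such that for every natural number N ≥ 1, the set A/N! = {a ∈ ℕ : a·N! ∈ A} contains a multiple of every positive integer. If there exists D ≥ 1 and a set C ⊆ ℤ that is periodic with period D (i.e., C + D = C) such that A ⊆ C, then C ∩ ℕ contains a nonzero multiple of D; in particular, if additionally C is (k,ℓ)-sum-free for some k > ℓ ≥ 1 with k + ℓ ≥ 3, then a contradiction arises, so A is not contained in any periodic (k,ℓ)-sum-free set. -/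
open Finset

theorem not_contained_in_periodic_sum_free (A : Set ℕ) (hpos : ∀ a ∈ A, 0 < a)
    (hmult : ∀ N : ℕ, 1 ≤ N → ∀ d : ℕ, 1 ≤ d →
      ∃ c : ℕ, c ∈ {a : ℕ | a * N.factorial ∈ A} ∧ d ∣ c ∧ 0 < c)
    (D : ℕ) (hD : 1 ≤ D) (C : Set ℤ)
    (hper : ∀ x : ℤ, x ∈ C ↔ x + D ∈ C)
    (hAC : ∀ a ∈ A, (a : ℤ) ∈ C)
    (k l : ℕ) (hl : 1 ≤ l) (hkl : l < k) (hsum : 3 ≤ k + l) :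
    (∃ x : ℤ, 0 < x ∧ (D : ℤ) ∣ x ∧ x ∈ C) ∧
    ¬ (∀ (x : Fin k → ℤ) (y : Fin l → ℤ),
        (∀ i, x i ∈ C) → (∀ j, y j ∈ C) → ∑ i, x i ≠ ∑ j, y j) := by
  obtain ⟨c, hcA, hdvd, hcpos⟩ := hmult 1 le_rfl D hD
  simp only [Set.mem_setOf_eq, Nat.factorial_one, mul_one] at hcA
  have hcC : (c : ℤ) ∈ C := hAC c hcA
  have hxpos : (0 : ℤ) < c := by exact_mod_cast hcpos
  have hxdvd : (D : ℤ) ∣ (c : ℤ) := Int.natCast_dvd_natCast.mpr hdvd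
  have hshift : ∀ n : ℕ, (c : ℤ) + n * D ∈ C := by
    intro n
    induction n with
    | zero => simpa using hcC
    | succ n ih =>
      have := (hper ((c : ℤ) + n * D)).mp ih
      convert this using 1
      push_cast; ring
  refine ⟨⟨c, hxpos, hxdvd, hcC⟩, ?_⟩
  intro h
  -- y_0 = c + (k - l) * c, others = c; x_i = c
  obtain ⟨m, hm⟩ := hxdvd
  have hkl' : l ≤ k := hkl.le
  have hyC : (c : ℤ) + (((k - l : ℕ) : ℤ) * m).toNat * D ∈ C ∧
      ((((k - l : ℕ) : ℤ)) * m).toNat = ((k - l : ℕ) : ℤ) * m := by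
    have hm0 : 0 ≤ m := by
      by_contra hneg
      push_neg at hneg
      have : (c : ℤ) ≤ 0 := hm ▸ mul_nonpos_of_nonneg_of_nonpos (by exact_mod_cast hD.trans' (by norm_num) : (0:ℤ) ≤ D) hneg.le
      omega
    have : (0 : ℤ) ≤ ((k - l : ℕ) : ℤ) * m := mul_nonneg (by positivity) hm0
    exact ⟨hshift _, Int.toNat_of_nonneg this⟩
  set y0 : ℤ := (c : ℤ) + ((k - l : ℕ) : ℤ) * m * D with hy0
  have hy0C : y0 ∈ C := by
    have := hyC.1
    rwa [hyC.2] at this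
  have hy0eq : y0 = (c : ℤ) + ((k - l : ℕ) : ℤ) * c := by
    rw [hy0, hm]; ring
  have hlpos : 0 < l := hl
  have := h (fun _ => (c : ℤ)) (fun j => if j = ⟨0, hlpos⟩ then y0 else (c : ℤ))
    (fun _ => hcC) (fun j => by by_cases hj : j = ⟨0, hlpos⟩ <;> simp [hj, hy0C, hcC])
  apply this
  have hsplit : (fun j : Fin l => if j = ⟨0, hlpos⟩ then y0 else (c : ℤ))
      = fun j => (c : ℤ) + (if j = ⟨0, hlpos⟩ then ((k - l : ℕ) : ℤ) * c else 0) := by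
    funext j
    by_cases hj : j = ⟨0, hlpos⟩ <;> simp [hj, hy0eq]
  rw [hsplit, Finset.sum_add_distrib, Finset.sum_ite_eq' univ (⟨0, hlpos⟩ : Fin l)]
  simp only [mem_univ, if_true, Finset.sum_const, card_univ, Fintype.card_fin,
    nsmul_eq_mul]
  have : ((l : ℤ)) + ((k - l : ℕ) : ℤ) = (k : ℤ) := by
    have := hkl.le
    push_cast [Nat.cast_sub this]
    ring
  nlinarith [this]
end
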